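/- For q > 1 and k ≥ 1 natural numbers n_1,...,n_k with each n_i ≥ 2 and w = n_1+...+n_k, the modified q-MZVs satisfy: \bar{ζ}_q(n_1,...,n_k) = (−1)^w \bar{z}_{q^{−1}}(n_1,...,n_k) + \sum_{j=1}^{k−1} \sum_{l_2+...+l_k=j, l_i ∈ {0,1}} (−1)^{w−j} \bar{z}_{q^{−1}}(n_1, n_2−l_2, ..., n_k−l_k). -/

import Mathlib

set_option maxHeartbeats 1000000


open scoped Classical

/-- The modified qMZV `z̄_p(n₁,…,n_k) = ∑_{m₁>⋯>m_k>0} p^{m₁} / ∏ᵢ(1−p^{mᵢ})^{nᵢ}`,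
for tuples indexed by `Fin (k+1)` (length `k+1 ≥ 1`). -/
noncomputable def zbarGen {k : ℕ} (p : ℝ) (n : Fin (k + 1) → ℕ) : ℝ :=
  ∑' m : Fin (k + 1) → ℕ,
    if (∀ i j : Fin (k + 1), i < j → m j < m i) ∧ (∀ i, 0 < m i) then
      p ^ m 0 / ∏ i, (1 - p ^ m i) ^ n i
    else 0

/-- Bradley's modified qMZV
`ζ̄_q(n₁,…,n_k) = ∑_{m₁>⋯>m_k>0} q^{∑(nᵢ−1)mᵢ} / ∏ᵢ(1−q^{mᵢ})^{nᵢ}`. -/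
noncomputable def zetaBarGen {k : ℕ} (q : ℝ) (n : Fin (k + 1) → ℕ) : ℝ :=
  ∑' m : Fin (k + 1) → ℕ,
    if (∀ i j : Fin (k + 1), i < j → m j < m i) ∧ (∀ i, 0 < m i) then
      q ^ (∑ i, (n i - 1) * m i) / ∏ i, (1 - q ^ m i) ^ n i
    else 0

/-- For `q > 1` and all entries `nᵢ ≥ 2`, with `w = ∑ nᵢ`:
`ζ̄_q(n) = (−1)^w z̄_{q⁻¹}(n) + ∑_{j=1}^{k−1} ∑_{l₂+⋯+l_k=j, lᵢ∈{0,1}}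
(−1)^{w−j} z̄_{q⁻¹}(n₁, n₂−l₂, …, n_k−l_k)`. -/
lemma summable_geom_pi (k : ℕ) (s : ℝ) (h0 : 0 ≤ s) (h1 : s < 1) :
    Summable (fun m : Fin k → ℕ => s ^ (∑ i, m i)) := by
  induction k with
  | zero => exact .of_finite
  | succ k ih =>
    have hg : Summable (fun a : ℕ => s ^ a) := summable_geometric_of_lt_one h0 h1
    have h2 : Summable (fun x : ℕ × (Fin k → ℕ) => s ^ x.1 * s ^ (∑ i, x.2 i)) :=
      Summable.mul_of_nonneg (f := fun a : ℕ => s ^ a)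
        (g := fun m : Fin k → ℕ => s ^ (∑ i, m i)) hg ih
        (fun x => pow_nonneg h0 _) (fun x => pow_nonneg h0 _)
    have hinj : Function.Injective
        (fun m : Fin (k + 1) → ℕ => ((m 0, fun i => m i.succ) : ℕ × (Fin k → ℕ))) := by
      intro a b hab
      funext i
      refine Fin.cases ?_ (fun j => ?_) i
      · exact congrArg Prod.fst hab
      · exact congrFun (congrArg Prod.snd hab) j
    have h3 := h2.comp_injective hinj
    refine h3.congr fun m => ?_
    show s ^ m 0 * s ^ (∑ i : Fin k, m i.succ) = _
    rw [← pow_add, Fin.sum_univ_succ]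

lemma summable_zbar_summand (q : ℝ) (hq : 1 < q) (k : ℕ) (e : Fin (k + 1) → ℕ) :
    Summable (fun m : Fin (k + 1) → ℕ =>
      if (∀ i j : Fin (k + 1), i < j → m j < m i) ∧ (∀ i, 0 < m i) then
        q⁻¹ ^ m 0 / ∏ i, (1 - q⁻¹ ^ m i) ^ e i
      else 0) := by
  set p := q⁻¹ with hpdef
  have hp0 : 0 < p := inv_pos.mpr (lt_trans one_pos hq)
  have hp1 : p < 1 := inv_lt_one_of_one_lt₀ hq
  set s : ℝ := p ^ ((k + 1 : ℝ)⁻¹) with hsdef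
  have hs0 : 0 ≤ s := Real.rpow_nonneg hp0.le _
  have hs1 : s < 1 := Real.rpow_lt_one hp0.le hp1 (by positivity)
  set E := ∑ i, e i with hEdef
  have hC0 : 0 < (1 - p) ^ E := pow_pos (by linarith) _
  have hbound : Summable (fun m : Fin (k + 1) → ℕ =>
      ((1 - p) ^ E)⁻¹ * s ^ (∑ i, m i)) :=
    (summable_geom_pi _ s hs0 hs1).mul_left _
  -- key pointwise facts
  have hpm : ∀ (m : Fin (k + 1) → ℕ), (∀ i, 0 < m i) → ∀ i, p ^ m i ≤ p := by
    intro m hm i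
    calc p ^ m i ≤ p ^ 1 := pow_le_pow_of_le_one hp0.le hp1.le (hm i)
    _ = p := pow_one p
  refine Summable.of_nonneg_of_le (fun m => ?_) (fun m => ?_) hbound
  · by_cases h : (∀ i j : Fin (k + 1), i < j → m j < m i) ∧ (∀ i, 0 < m i)
    · rw [if_pos h]
      have ht : ∀ i, 0 < 1 - p ^ m i := fun i => by
        have := hpm m h.2 i; linarith
      exact div_nonneg (pow_nonneg hp0.le _)
        (Finset.prod_nonneg fun i _ => pow_nonneg (ht i).le _)
    · rw [if_neg h]
  · by_cases h : (∀ i j : Fin (k + 1), i < j → m j < m i) ∧ (∀ i, 0 < m i)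
    · rw [if_pos h]
      have ht : ∀ i, 0 < 1 - p ^ m i := fun i => by
        have := hpm m h.2 i; linarith
      have hD : (1 - p) ^ E ≤ ∏ i, (1 - p ^ m i) ^ e i := by
        rw [hEdef, ← Finset.prod_pow_eq_pow_sum]
        refine Finset.prod_le_prod (fun i _ => pow_nonneg (by linarith) _) (fun i _ => ?_)
        exact pow_le_pow_left₀ (by linarith) (by have := hpm m h.2 i; linarith) _
      have hnum : p ^ m 0 ≤ s ^ (∑ i, m i) := by
        have hsum : (∑ i, m i) ≤ (k + 1) * m 0 := by
          calc (∑ i, m i) ≤ ∑ _i : Fin (k + 1), m 0 :=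
            Finset.sum_le_sum (fun i _ => by
              rcases eq_or_ne i 0 with rfl | hi
              · exact le_refl _
              · exact (h.1 0 i (Fin.pos_of_ne_zero hi)).le)
          _ = (k + 1) * m 0 := by simp [Finset.sum_const, Finset.card_univ]
        have h1 : s ^ (∑ i, m i) = p ^ (((k:ℝ) + 1)⁻¹ * (∑ i, m i : ℕ)) := by
          rw [hsdef, ← Real.rpow_natCast (p ^ ((k + 1 : ℝ)⁻¹)) (∑ i, m i),
            ← Real.rpow_mul hp0.le]
        have h2 : p ^ m 0 = p ^ ((m 0 : ℕ) : ℝ) := by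
          rw [Real.rpow_natCast]
        rw [h1, h2]
        refine Real.rpow_le_rpow_of_exponent_ge hp0 hp1.le ?_
        rw [inv_mul_le_iff₀ (by positivity)]
        calc ((∑ i, m i : ℕ) : ℝ) ≤ (((k + 1) * m 0 : ℕ) : ℝ) := by exact_mod_cast hsum
        _ = ((k:ℝ) + 1) * (m 0 : ℕ) := by push_cast; ring
      calc p ^ m 0 / ∏ i, (1 - p ^ m i) ^ e i
          ≤ s ^ (∑ i, m i) / (1 - p) ^ E :=
            div_le_div₀ (by positivity) hnum hC0 hD
        _ = ((1 - p) ^ E)⁻¹ * s ^ (∑ i, m i) := by rw [div_eq_mul_inv, mul_comm]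
    · rw [if_neg h]
      positivity

lemma neg_one_pow_sub_real {w j : ℕ} (h : j ≤ w) :
    ((-1 : ℝ)) ^ (w - j) = (-1) ^ w * (-1) ^ j := by
  have h1 : ((-1 : ℝ)) ^ (w - j) * (-1) ^ j = (-1) ^ w := by
    rw [← pow_add, Nat.sub_add_cancel h]
  have h2 : ((-1 : ℝ)) ^ j * (-1) ^ j = 1 := by
    rw [← pow_add]; exact Even.neg_one_pow ⟨j, rfl⟩
  calc ((-1 : ℝ)) ^ (w - j) = (-1) ^ (w - j) * ((-1) ^ j * (-1) ^ j) := by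
        rw [h2, mul_one]
    _ = ((-1) ^ (w - j) * (-1) ^ j) * (-1) ^ j := by ring
    _ = (-1) ^ w * (-1) ^ j := by rw [h1]

lemma termwise (q : ℝ) (hq : 1 < q) (k : ℕ) (n : Fin (k + 1) → ℕ) (hn : ∀ i, 2 ≤ n i)
    (m : Fin (k + 1) → ℕ) (hdec : ∀ i j : Fin (k + 1), i < j → m j < m i)
    (hpos : ∀ i, 0 < m i) :
    q ^ (∑ i, (n i - 1) * m i) / ∏ i, (1 - q ^ m i) ^ n i
      = ∑ l ∈ Finset.univ.filter (fun l : Fin (k + 1) → Fin 2 => l 0 = 0),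
          (-1 : ℝ) ^ ((∑ i, n i) - ∑ i, (l i : ℕ)) *
            (q⁻¹ ^ m 0 / ∏ i, (1 - q⁻¹ ^ m i) ^ (n i - (l i : ℕ))) := by
  have hq0 : 0 < q := lt_trans one_pos hq
  set p := q⁻¹ with hpdef
  have hp0 : 0 < p := inv_pos.mpr hq0
  have hp1 : p < 1 := inv_lt_one_of_one_lt₀ hq
  set t : Fin (k + 1) → ℝ := fun i => 1 - p ^ m i with htdef
  have hpmlt : ∀ i, p ^ m i < 1 := fun i =>
    lt_of_le_of_lt (by calc p ^ m i ≤ p ^ 1 := pow_le_pow_of_le_one hp0.le hp1.le (hpos i)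
                         _ = p := pow_one p) hp1
  have ht : ∀ i, 0 < t i := fun i => by have := hpmlt i; simp only [htdef]; linarith
  have htne : ∀ i, t i ≠ 0 := fun i => (ht i).ne'
  set w := ∑ i, n i with hwdef
  -- Step A
  have hA : ∀ i, (1 - q ^ m i) = (-1) * q ^ m i * t i := by
    intro i
    have h1 : q ^ m i * p ^ m i = 1 := by
      rw [hpdef, ← mul_pow, mul_inv_cancel₀ hq0.ne', one_pow]
    simp only [htdef]; ring_nf; nlinarith [h1]
  -- Step B
  have hB : ∏ i, (1 - q ^ m i) ^ n i
      = (-1) ^ w * q ^ (∑ i, n i * m i) * ∏ i, t i ^ n i := by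
    calc ∏ i, (1 - q ^ m i) ^ n i
        = ∏ i, ((-1) ^ n i * q ^ (m i * n i) * t i ^ n i) := by
          refine Finset.prod_congr rfl fun i _ => ?_
          rw [hA i, mul_pow, mul_pow, ← pow_mul]
      _ = (∏ i, (-1 : ℝ) ^ n i) * (∏ i, q ^ (m i * n i)) * ∏ i, t i ^ n i := by
          rw [Finset.prod_mul_distrib, Finset.prod_mul_distrib]
      _ = (-1) ^ w * q ^ (∑ i, n i * m i) * ∏ i, t i ^ n i := by
          rw [Finset.prod_pow_eq_pow_sum, Finset.prod_pow_eq_pow_sum,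
            show (∑ i, m i * n i) = ∑ i, n i * m i from
              Finset.sum_congr rfl fun i _ => Nat.mul_comm _ _, hwdef]
  -- Step C : LHS = (-1)^w * (p^{∑m} / ∏ t^n)
  have hsplit : (∑ i, n i * m i) = (∑ i, (n i - 1) * m i) + ∑ i, m i := by
    rw [← Finset.sum_add_distrib]
    refine Finset.sum_congr rfl fun i _ => ?_
    have h2 : 1 ≤ n i := le_trans one_le_two (hn i)
    calc n i * m i = (n i - 1 + 1) * m i := by rw [Nat.sub_add_cancel h2]
      _ = (n i - 1) * m i + m i := by rw [Nat.add_mul, one_mul]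
  have hppow : p ^ (∑ i, m i) = (q ^ (∑ i, m i))⁻¹ := by
    rw [hpdef, inv_pow]
  have hC : q ^ (∑ i, (n i - 1) * m i) / ∏ i, (1 - q ^ m i) ^ n i
      = (-1) ^ w * (p ^ (∑ i, m i) / ∏ i, t i ^ n i) := by
    rw [hB, hsplit, pow_add, hppow]
    have hQ1 : (0:ℝ) < q ^ (∑ i, (n i - 1) * m i) := pow_pos hq0 _
    have hQ2 : (0:ℝ) < q ^ (∑ i, m i) := pow_pos hq0 _
    have hT : (0:ℝ) < ∏ i, t i ^ n i :=
      Finset.prod_pos fun i _ => pow_pos (ht i) _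
    have hsq : ((-1 : ℝ)) ^ w * (-1) ^ w = 1 := by
      rw [← pow_add]; exact Even.neg_one_pow ⟨w, rfl⟩
    have hwne : ((-1 : ℝ)) ^ w ≠ 0 := pow_ne_zero _ (by norm_num)
    have key : ∀ a b T s : ℝ, a ≠ 0 → b ≠ 0 → T ≠ 0 → s * s = 1 →
        a / (s * (a * b) * T) = s * (b⁻¹ / T) := by
      intro a b T s ha hb hT hs
      have hsne : s ≠ 0 := by intro h; rw [h] at hs; simp at hs
      field_simp
      linear_combination (-1 : ℝ) * hs
    exact key _ _ _ _ hQ1.ne' hQ2.ne' hT.ne' hsq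
  rw [hC]
  -- Step D : compute the sum
  have hub : ∀ l : Fin (k + 1) → Fin 2, (∑ i, (l i : ℕ)) ≤ w := by
    intro l
    calc (∑ i, (l i : ℕ)) ≤ ∑ i, 2 := Finset.sum_le_sum fun i _ => by omega
      _ ≤ ∑ i, n i := Finset.sum_le_sum fun i _ => hn i
  set L := Finset.univ.filter (fun l : Fin (k + 1) → Fin 2 => l 0 = 0) with hLdef
  set F : ∀ _ : Fin (k + 1), Fin 2 → ℝ :=
    fun i j => (-1) ^ ((j : ℕ)) / t i ^ (n i - (j : ℕ)) with hFdef
  have hD : ∑ l ∈ L, (-1 : ℝ) ^ (w - ∑ i, (l i : ℕ)) *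
        (p ^ m 0 / ∏ i, (1 - p ^ m i) ^ (n i - (l i : ℕ)))
      = (-1) ^ w * ∑ l ∈ L, p ^ m 0 * ∏ i, F i (l i) := by
    rw [Finset.mul_sum]
    refine Finset.sum_congr rfl fun l _ => ?_
    rw [neg_one_pow_sub_real (hub l)]
    simp only [hFdef]
    rw [Finset.prod_div_distrib, Finset.prod_pow_eq_pow_sum]
    have h5 : ∏ i, (1 - p ^ m i) ^ (n i - (l i : ℕ)) = ∏ i, t i ^ (n i - (l i : ℕ)) := rfl
    rw [h5]
    ring
  rw [hD]
  congr 1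
  -- now : p ^ (∑ m) / ∏ t ^ n = ∑ l ∈ L, p ^ m 0 * ∏ F
  set T : Fin (k + 1) → Finset (Fin 2) :=
    fun i => if i = 0 then {0} else Finset.univ with hTdef
  have hL : L = Fintype.piFinset T := by
    ext l
    simp only [hLdef, Finset.mem_filter, Finset.mem_univ, true_and,
      Fintype.mem_piFinset, hTdef]
    constructor
    · intro h0 i
      by_cases hi : i = 0
      · subst hi; simp [h0]
      · simp [hi]
    · intro h
      have := h 0
      simpa using this
  rw [hL, ← Finset.mul_sum, ← Finset.prod_univ_sum]
  have hG0 : ∑ j ∈ T 0, F 0 j = (t 0 ^ n 0)⁻¹ := by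
    simp only [hTdef, if_pos rfl, Finset.sum_singleton, hFdef]
    norm_num
  have hGs : ∀ i : Fin (k + 1), i ≠ 0 → ∑ j ∈ T i, F i j = p ^ m i / t i ^ n i := by
    intro i hi
    simp only [hTdef, if_neg hi, hFdef]
    rw [Fin.sum_univ_two]
    have hv0 : ((0 : Fin 2) : ℕ) = 0 := rfl
    have hv1 : ((1 : Fin 2) : ℕ) = 1 := rfl
    rw [hv0, hv1]
    have hnn : n i ≠ 0 := by have := hn i; omega
    have hpow : t i ^ n i = t i ^ (n i - 1) * t i := (pow_sub_one_mul hnn _).symm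
    have hpt : p ^ m i = 1 - t i := by simp [htdef]
    have key2 : ∀ tt : ℝ, tt ≠ 0 → ∀ N : ℕ, N ≠ 0 →
        (1 : ℝ) / tt ^ N - 1 / tt ^ (N - 1) = (1 - tt) / tt ^ N := by
      intro tt htt N hN
      have hp2 : tt ^ N = tt ^ (N - 1) * tt := (pow_sub_one_mul hN tt).symm
      have h1 : tt ^ (N - 1) ≠ 0 := pow_ne_zero _ htt
      rw [hp2]
      field_simp
    rw [pow_zero, Nat.sub_zero, pow_one, hpt, neg_div, ← sub_eq_add_neg]
    exact key2 (t i) (htne i) (n i) hnn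
  have hprodG : ∏ i, ∑ j ∈ T i, F i j
      = (t 0 ^ n 0)⁻¹ * ∏ i : Fin k, p ^ m i.succ / t i.succ ^ n i.succ := by
    rw [Fin.prod_univ_succ, hG0]
    congr 1
    exact Finset.prod_congr rfl fun i _ => hGs i.succ (Fin.succ_ne_zero i)
  rw [hprodG]
  have hX : p ^ (∑ i, m i) / ∏ i, t i ^ n i = ∏ i, p ^ m i / t i ^ n i := by
    rw [Finset.prod_div_distrib, Finset.prod_pow_eq_pow_sum]
  rw [hX, Fin.prod_univ_succ]
  ring

theorem zetaBar_decomposition (q : ℝ) (hq : 1 < q) (k : ℕ) (n : Fin (k + 1) → ℕ)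
    (hn : ∀ i, 2 ≤ n i) :
    zetaBarGen q n =
      (-1 : ℝ) ^ (∑ i, n i) * zbarGen q⁻¹ n
        + ∑ j ∈ Finset.Icc 1 k,
            ∑ l ∈ Finset.univ.filter
                (fun l : Fin (k + 1) → Fin 2 => l 0 = 0 ∧ (∑ i, (l i : ℕ)) = j),
              (-1 : ℝ) ^ ((∑ i, n i) - j) * zbarGen q⁻¹ (fun i => n i - (l i : ℕ)) := by
  set w := ∑ i, n i with hwdef
  set L := Finset.univ.filter (fun l : Fin (k + 1) → Fin 2 => l 0 = 0) with hLdef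
  set f : (Fin (k + 1) → Fin 2) → ℝ :=
    fun l => (-1 : ℝ) ^ (w - ∑ i, (l i : ℕ)) * zbarGen q⁻¹ (fun i => n i - (l i : ℕ))
    with hfdef
  -- Step 1 : regrouping of the right-hand side
  have hmap : ∀ l ∈ L, (∑ i, (l i : ℕ)) ∈ Finset.range (k + 1) := by
    intro l hl
    rw [hLdef, Finset.mem_filter] at hl
    rw [Finset.mem_range]
    have h0 : ((l 0 : ℕ)) = 0 := by rw [hl.2]; rfl
    calc (∑ i, (l i : ℕ)) = (l 0 : ℕ) + ∑ i : Fin k, ((l i.succ : ℕ)) :=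
          Fin.sum_univ_succ _
      _ = ∑ i : Fin k, ((l i.succ : ℕ)) := by rw [h0, zero_add]
      _ ≤ ∑ _i : Fin k, 1 := Finset.sum_le_sum fun i _ => by omega
      _ = k := by simp
      _ < k + 1 := Nat.lt_succ_self k
  have hfiber : ∑ l ∈ L, f l = ∑ j ∈ Finset.range (k + 1),
      ∑ l ∈ L.filter (fun l => (∑ i, (l i : ℕ)) = j), f l :=
    (Finset.sum_fiberwise_of_maps_to hmap f).symm
  have hrange : Finset.range (k + 1) = insert 0 (Finset.Icc 1 k) := by
    ext x; simp [Finset.mem_range, Finset.mem_Icc]; omega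
  have h0notin : (0 : ℕ) ∉ Finset.Icc 1 k := by simp
  have hfiber0 : L.filter (fun l => (∑ i, (l i : ℕ)) = 0) = {fun _ => 0} := by
    ext l
    rw [Finset.mem_filter, hLdef, Finset.mem_filter, Finset.mem_singleton]
    constructor
    · rintro ⟨⟨-, h0⟩, hs⟩
      funext i
      have := Finset.sum_eq_zero_iff.mp hs i (Finset.mem_univ i)
      omega
    · rintro rfl
      refine ⟨⟨Finset.mem_univ _, rfl⟩, ?_⟩
      simp
  have hf0 : f (fun _ => 0) = (-1 : ℝ) ^ w * zbarGen q⁻¹ n := by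
    rw [hfdef]
    norm_num
  have hfj : ∀ j, L.filter (fun l => (∑ i, (l i : ℕ)) = j)
      = Finset.univ.filter
          (fun l : Fin (k + 1) → Fin 2 => l 0 = 0 ∧ (∑ i, (l i : ℕ)) = j) := by
    intro j
    rw [hLdef, Finset.filter_filter]
  have hstep1 : ∑ l ∈ L, f l
      = (-1 : ℝ) ^ w * zbarGen q⁻¹ n
        + ∑ j ∈ Finset.Icc 1 k,
            ∑ l ∈ Finset.univ.filter
                (fun l : Fin (k + 1) → Fin 2 => l 0 = 0 ∧ (∑ i, (l i : ℕ)) = j),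
              (-1 : ℝ) ^ (w - j) * zbarGen q⁻¹ (fun i => n i - (l i : ℕ)) := by
    rw [hfiber, hrange, Finset.sum_insert h0notin, hfiber0, Finset.sum_singleton, hf0]
    congr 1
    refine Finset.sum_congr rfl fun j hj => ?_
    rw [hfj j]
    refine Finset.sum_congr rfl fun l hl => ?_
    rw [Finset.mem_filter] at hl
    simp only [hfdef]
    rw [hl.2.2]
  rw [← hstep1]
  -- Step 2 : the analytic part
  have hterm : ∀ m : Fin (k + 1) → ℕ,
      (if (∀ i j : Fin (k + 1), i < j → m j < m i) ∧ (∀ i, 0 < m i) then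
          q ^ (∑ i, (n i - 1) * m i) / ∏ i, (1 - q ^ m i) ^ n i
        else 0)
      = ∑ l ∈ L, (-1 : ℝ) ^ (w - ∑ i, (l i : ℕ)) *
          (if (∀ i j : Fin (k + 1), i < j → m j < m i) ∧ (∀ i, 0 < m i) then
            q⁻¹ ^ m 0 / ∏ i, (1 - q⁻¹ ^ m i) ^ (n i - (l i : ℕ))
          else 0) := by
    intro m
    by_cases h : (∀ i j : Fin (k + 1), i < j → m j < m i) ∧ (∀ i, 0 < m i)
    · simp only [if_pos h]
      exact termwise q hq k n hn m h.1 h.2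
    · simp only [if_neg h, mul_zero, Finset.sum_const_zero]
  calc zetaBarGen q n
      = ∑' m : Fin (k + 1) → ℕ, ∑ l ∈ L, (-1 : ℝ) ^ (w - ∑ i, (l i : ℕ)) *
          (if (∀ i j : Fin (k + 1), i < j → m j < m i) ∧ (∀ i, 0 < m i) then
            q⁻¹ ^ m 0 / ∏ i, (1 - q⁻¹ ^ m i) ^ (n i - (l i : ℕ))
          else 0) := tsum_congr hterm
    _ = ∑ l ∈ L, ∑' m : Fin (k + 1) → ℕ, (-1 : ℝ) ^ (w - ∑ i, (l i : ℕ)) *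
          (if (∀ i j : Fin (k + 1), i < j → m j < m i) ∧ (∀ i, 0 < m i) then
            q⁻¹ ^ m 0 / ∏ i, (1 - q⁻¹ ^ m i) ^ (n i - (l i : ℕ))
          else 0) :=
        Summable.tsum_finsetSum fun l _ =>
          ((summable_zbar_summand q hq k (fun i => n i - (l i : ℕ))).mul_left _)
    _ = ∑ l ∈ L, f l := by
        refine Finset.sum_congr rfl fun l _ => ?_
        exact (summable_zbar_summand q hq k (fun i => n i - (l i : ℕ))).tsum_mul_left _
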